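/- Let A ∈ ℤ^{m×n}, ε > 0, and let p ∈ ℕ satisfy (1/p)·n·g_∞(A) ≤ ε. If ẑ is an optimum of the integer program min{f(z/p) : Az = p·b, p·l ≤ z ≤ p·u, z ∈ ℤⁿ}, then (1/p)·ẑ is within ℓ_∞-distance ε of some optimum of the continuous relaxation min{f(x) : Ax = b, l ≤ x ≤ u, x ∈ ℝⁿ}. -/

import Mathlib

/-- `x` is conformal to `y`. -/
def ConformalTo {n : ℕ} (x y : Fin n → ℤ) : Prop :=
  ∀ i, 0 ≤ x i * y i ∧ |x i| ≤ |y i|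

/-- `g` is an element of the Graver basis of `A`. -/
def InGraver {m n : ℕ} (A : Matrix (Fin m) (Fin n) ℤ) (g : Fin n → ℤ) : Prop :=
  g ≠ 0 ∧ A.mulVec g = 0 ∧
    ∀ h : Fin n → ℤ, h ≠ 0 → A.mulVec h = 0 → ConformalTo h g → h = g

/-- Feasibility for the continuous relaxation `Ax = b, l ≤ x ≤ u, x ∈ ℝⁿ`. -/
def RelFeas {m n : ℕ} (A : Matrix (Fin m) (Fin n) ℤ) (b : Fin m → ℤ)
    (l u : Fin n → ℤ) (x : Fin n → ℝ) : Prop :=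
  ((A.map (Int.cast : ℤ → ℝ)).mulVec x = fun i => (b i : ℝ)) ∧
    ∀ i, (l i : ℝ) ≤ x i ∧ x i ≤ (u i : ℝ)

/-- Optimality for the continuous relaxation with objective `f`. -/
def RelOpt {m n : ℕ} (A : Matrix (Fin m) (Fin n) ℤ) (b : Fin m → ℤ)
    (l u : Fin n → ℤ) (f : (Fin n → ℝ) → ℝ) (x : Fin n → ℝ) : Prop :=
  RelFeas A b l u x ∧ ∀ y, RelFeas A b l u y → f x ≤ f y

/-- Feasibility for the integer program `Ax = b, l ≤ x ≤ u, x ∈ ℤⁿ`. -/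
def IntFeas {m n : ℕ} (A : Matrix (Fin m) (Fin n) ℤ) (b : Fin m → ℤ)
    (l u : Fin n → ℤ) (x : Fin n → ℤ) : Prop :=
  A.mulVec x = b ∧ ∀ i, l i ≤ x i ∧ x i ≤ u i

/-- Optimality for the integer program with objective `F` (evaluated on casts). -/
def IntOpt {m n : ℕ} (A : Matrix (Fin m) (Fin n) ℤ) (b : Fin m → ℤ)
    (l u : Fin n → ℤ) (F : (Fin n → ℝ) → ℝ) (x : Fin n → ℤ) : Prop :=
  IntFeas A b l u x ∧
    ∀ y, IntFeas A b l u y → F (fun i => (x i : ℝ)) ≤ F (fun i => (y i : ℝ))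

private lemma castVec_mulVec_real {m n : ℕ} (A : Matrix (Fin m) (Fin n) ℤ) (v : Fin n → ℤ) :
    (A.map (Int.cast : ℤ → ℝ)).mulVec (fun i => (v i : ℝ)) = fun j => ((A.mulVec v) j : ℝ) := by
  funext j
  simp only [Matrix.mulVec, dotProduct, Matrix.map_apply]
  push_cast
  rfl

private lemma exists_rat_kernel_near {m n : ℕ} (A : Matrix (Fin m) (Fin n) ℤ)
    (y : Fin n → ℝ) (hy : (A.map (Int.cast : ℤ → ℝ)).mulVec y = 0)
    (δ : ℝ) (hδ : 0 < δ) :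
    ∃ q : Fin n → ℚ,
      ((A.map (Int.cast : ℤ → ℚ)).mulVec q = 0) ∧
      (∀ i, y i = 0 → q i = 0) ∧ (∀ i, |(q i : ℝ) - y i| < δ) := by
  classical
  set V : Submodule ℚ ℝ := Submodule.span ℚ (Set.range y) with hV
  haveI : FiniteDimensional ℚ V := FiniteDimensional.span_of_finite ℚ (Set.finite_range y)
  set k := Module.finrank ℚ V with hk
  set bV : Module.Basis (Fin k) ℚ V := Module.finBasis ℚ V with hbV
  have hyV : ∀ i, y i ∈ V := fun i => Submodule.subset_span ⟨i, rfl⟩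
  set yV : Fin n → V := fun i => ⟨y i, hyV i⟩ with hyVdef
  set q : Fin k → Fin n → ℚ := fun t i => bV.repr (yV i) t with hqdef
  have hrepr : ∀ i, y i = ∑ t, (q t i : ℝ) * ((bV t : ℝ)) := by
    intro i
    have h1 : (∑ t, bV.repr (yV i) t • bV t) = yV i := bV.sum_repr (yV i)
    have h3 : y i = ((∑ t, bV.repr (yV i) t • bV t : V) : ℝ) := by rw [h1]
    rw [h3, Submodule.coe_sum]
    refine Finset.sum_congr rfl fun t _ => ?_
    rw [Submodule.coe_smul, Rat.smul_def]
  have hq0 : ∀ i, y i = 0 → ∀ t, q t i = 0 := by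
    intro i hyi t
    have : yV i = 0 := Subtype.ext hyi
    simp [hqdef, this]
  have hker : ∀ j t, ∑ i, (A j i : ℚ) * q t i = 0 := by
    intro j t
    have hw : (∑ i, (A j i : ℚ) • yV i) = 0 := by
      apply Subtype.ext
      rw [Submodule.coe_sum]
      have : ∑ i, (((A j i : ℚ) • yV i : V) : ℝ) = ∑ i, (A j i : ℝ) * y i := by
        refine Finset.sum_congr rfl fun i _ => ?_
        rw [Submodule.coe_smul, Rat.smul_def]
        push_cast
        rfl
      rw [this]
      have := congrFun hy j
      simpa [Matrix.mulVec, dotProduct] using this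
    have := congrArg (fun v => bV.repr v t) hw
    simpa [map_sum, hqdef] using this
  -- choose rational approximations of basis vectors
  set C : Fin k → ℚ := fun t => 1 + ∑ i, |q t i| with hC
  have hCpos : ∀ t, (0:ℝ) < (C t : ℝ) := by
    intro t
    have : (0:ℚ) < C t := by positivity
    exact_mod_cast this
  have hqC : ∀ t i, |(q t i : ℝ)| ≤ (C t : ℝ) := by
    intro t i
    have h1 : |q t i| ≤ C t := by
      have : |q t i| ≤ ∑ j, |q t j| :=
        Finset.single_le_sum (f := fun j => |q t j|) (fun j _ => abs_nonneg _) (Finset.mem_univ i)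
      simp only [hC]
      linarith
    calc |(q t i : ℝ)| = ((|q t i| : ℚ) : ℝ) := by push_cast; rfl
    _ ≤ _ := by exact_mod_cast h1
  have hr : ∀ t : Fin k, ∃ r : ℚ, |(bV t : ℝ) - r| < δ / ((k+1) * C t) := by
    intro t
    refine exists_rat_near _ ?_
    have : (0:ℝ) < (k+1 : ℝ) := by positivity
    positivity
  choose r hrnear using hr
  refine ⟨fun i => ∑ t, r t * q t i, ?_, ?_, ?_⟩
  · funext j
    have : ∑ i, (A j i : ℚ) * ∑ t, r t * q t i = 0 := by
      calc ∑ i, (A j i : ℚ) * ∑ t, r t * q t i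
          = ∑ i, ∑ t, r t * ((A j i : ℚ) * q t i) := by
            refine Finset.sum_congr rfl fun i _ => ?_
            rw [Finset.mul_sum]
            exact Finset.sum_congr rfl fun t _ => by ring
        _ = ∑ t, ∑ i, r t * ((A j i : ℚ) * q t i) := Finset.sum_comm
        _ = ∑ t, r t * ∑ i, (A j i : ℚ) * q t i := by
            refine Finset.sum_congr rfl fun t _ => ?_
            rw [Finset.mul_sum]
        _ = 0 := by simp [hker j]
    simpa [Matrix.mulVec, dotProduct] using this
  · intro i hyi
    simp [hq0 i hyi]
  · intro i
    have hexp : ((∑ t, r t * q t i : ℚ) : ℝ) - y i = ∑ t, ((r t : ℝ) - (bV t : ℝ)) * (q t i : ℝ) := by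
      rw [hrepr i]
      push_cast
      rw [← Finset.sum_sub_distrib]
      refine Finset.sum_congr rfl fun t _ => by ring
    rw [hexp]
    calc |∑ t, ((r t : ℝ) - (bV t : ℝ)) * (q t i : ℝ)|
        ≤ ∑ t, |((r t : ℝ) - (bV t : ℝ)) * (q t i : ℝ)| := Finset.abs_sum_le_sum_abs _ _
      _ ≤ ∑ t : Fin k, δ / (k+1) := by
          refine Finset.sum_le_sum fun t _ => ?_
          rw [abs_mul]
          have h1 : |(r t : ℝ) - (bV t : ℝ)| ≤ δ / ((k+1) * C t) := by
            rw [abs_sub_comm]; exact (hrnear t).le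
          calc |(r t : ℝ) - (bV t : ℝ)| * |(q t i : ℝ)|
              ≤ (δ / ((k+1) * C t)) * (C t : ℝ) :=
                mul_le_mul h1 (hqC t i) (abs_nonneg _) (by positivity)
            _ = δ / (k+1) := by
              rw [div_mul_eq_mul_div, div_eq_div_iff (mul_pos (by positivity) (hCpos t)).ne' (by positivity)]; ring
      _ = k * (δ / (k+1)) := by simp [Finset.sum_const, mul_comm]
      _ < δ := by
          rw [mul_div_assoc'] at *
          rw [div_lt_iff₀ (by positivity)]
          nlinarith

private lemma exists_int_conformal {m n : ℕ} (A : Matrix (Fin m) (Fin n) ℤ)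
    (y : Fin n → ℝ) (hy : (A.map (Int.cast : ℤ → ℝ)).mulVec y = 0) (hy0 : y ≠ 0) :
    ∃ g : Fin n → ℤ, g ≠ 0 ∧ A.mulVec g = 0 ∧
      (∀ i, 0 ≤ (g i : ℝ) * y i) ∧ (∀ i, y i = 0 → g i = 0) := by
  classical
  -- the support of y is nonempty
  obtain ⟨i₀, hi₀⟩ : ∃ i, y i ≠ 0 := by
    by_contra h
    push_neg at h
    exact hy0 (funext h)
  set S : Finset (Fin n) := Finset.univ.filter (fun i => y i ≠ 0) with hS
  have hSne : S.Nonempty := ⟨i₀, by simp [hS, hi₀]⟩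
  obtain ⟨iδ, hiδS, hiδmin⟩ := Finset.exists_min_image S (fun i => |y i|) hSne
  set δ := |y iδ| with hδdef
  have hδpos : 0 < δ := by
    have : y iδ ≠ 0 := by simpa [hS] using hiδS
    exact abs_pos.mpr this
  obtain ⟨q, hqker, hq0, hqnear⟩ := exists_rat_kernel_near A y hy δ hδpos
  have hsign : ∀ i, 0 ≤ (q i : ℝ) * y i := by
    intro i
    rcases eq_or_ne (y i) 0 with h | h
    · simp [h]
    · have hiS : i ∈ S := by simp [hS, h]
      have hδle : δ ≤ |y i| := hiδmin i hiS
      have hnear := hqnear i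
      rcases lt_or_gt_of_ne h with hneg | hpos
      · have : (q i : ℝ) < 0 := by
          have := abs_lt.mp hnear
          have h2 : |y i| = -(y i) := abs_of_neg hneg
          linarith [h2 ▸ hδle]
        nlinarith
      · have : (0:ℝ) < q i := by
          have := abs_lt.mp hnear
          have h2 : |y i| = y i := abs_of_pos hpos
          linarith [h2 ▸ hδle]
        nlinarith
  -- clear denominators
  set d : ℕ := ∏ i, (q i).den with hd
  have hdpos : 0 < d := Finset.prod_pos fun i _ => (q i).pos
  have hden : ∀ i, ((q i).den : ℤ) ∣ (d : ℤ) := by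
    intro i
    exact_mod_cast Int.natCast_dvd_natCast.mpr (Finset.dvd_prod_of_mem (fun i => (q i).den) (Finset.mem_univ i))
  have hint : ∀ i, ∃ z : ℤ, (z : ℚ) = (d : ℚ) * q i := by
    intro i
    obtain ⟨c, hc⟩ := hden i
    refine ⟨c * (q i).num, ?_⟩
    have hdenne : ((q i).den : ℚ) ≠ 0 := by exact_mod_cast (q i).den_nz
    have hnum : q i * ((q i).den : ℚ) = ((q i).num : ℚ) := by
      have h := Rat.num_div_den (q i)
      nth_rewrite 1 [← h]
      rw [div_mul_cancel₀ _ hdenne]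
    have hcQ : (d : ℚ) = ((q i).den : ℚ) * (c : ℚ) := by exact_mod_cast hc
    push_cast
    rw [hcQ, ← hnum]
    ring
  choose g hg using hint
  have hgq : ∀ i, (g i : ℝ) = (d : ℝ) * (q i : ℝ) := by
    intro i
    have := hg i
    have : ((g i : ℚ) : ℝ) = (((d : ℚ) * q i : ℚ) : ℝ) := by rw [this]
    push_cast at this
    exact_mod_cast this
  refine ⟨g, ?_, ?_, ?_, ?_⟩
  · intro hgz
    have : g iδ = 0 := by rw [hgz]; rfl
    have hq : q iδ = 0 := by
      have h2 := hg iδ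
      rw [this] at h2
      push_cast at h2
      have hd0 : (d:ℚ) ≠ 0 := by exact_mod_cast hdpos.ne'
      rcases mul_eq_zero.mp h2.symm with h | h
      · exact absurd h hd0
      · exact h
    have h3 := hqnear iδ
    rw [hq, Rat.cast_zero, zero_sub, abs_neg] at h3
    have h4 : ¬ (|y iδ| < δ) := by rw [hδdef]; exact lt_irrefl _
    exact h4 h3
  · funext j
    have h0 := congrFun hqker j
    simp only [Matrix.mulVec, dotProduct, Matrix.map_apply, Pi.zero_apply] at h0 ⊢
    have : ((∑ i, A j i * g i : ℤ) : ℚ) = 0 := by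
      push_cast
      have : ∑ i, ((A j i : ℚ) * (g i : ℚ)) = (d : ℚ) * ∑ i, (A j i : ℚ) * q i := by
        rw [Finset.mul_sum]
        refine Finset.sum_congr rfl fun i _ => ?_
        rw [hg i]; ring
      rw [this, h0, mul_zero]
    exact_mod_cast this
  · intro i
    have := hsign i
    rw [hgq i]
    have hd0 : (0:ℝ) ≤ d := by positivity
    nlinarith
  · intro i hyi
    have : q i = 0 := hq0 i hyi
    have h2 := hg i
    rw [this, mul_zero] at h2
    exact_mod_cast h2

private lemma exists_graver_conformal {m n : ℕ} (A : Matrix (Fin m) (Fin n) ℤ)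
    (y : Fin n → ℝ) (hy : (A.map (Int.cast : ℤ → ℝ)).mulVec y = 0) (hy0 : y ≠ 0) :
    ∃ g : Fin n → ℤ, InGraver A g ∧ (∀ i, 0 ≤ (g i : ℝ) * y i) ∧
      (∀ i, y i = 0 → g i = 0) := by
  classical
  obtain ⟨g₀, hg₀ne, hg₀ker, hg₀sign, hg₀zero⟩ := exists_int_conformal A y hy hy0
  have hP : ∃ N, ∃ h : Fin n → ℤ, h ≠ 0 ∧ A.mulVec h = 0 ∧ ConformalTo h g₀ ∧
      (∑ i, (h i).natAbs) = N :=
    ⟨_, g₀, hg₀ne, hg₀ker, fun i => ⟨mul_self_nonneg _, le_refl _⟩, rfl⟩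
  obtain ⟨h, hhne, hhker, hhconf, hhsum⟩ := Nat.find_spec hP
  have habs : ∀ a b : ℤ, |a| ≤ |b| → a.natAbs ≤ b.natAbs := by
    intro a b hab
    have : (a.natAbs : ℤ) ≤ (b.natAbs : ℤ) := by
      rw [← Int.abs_eq_natAbs, ← Int.abs_eq_natAbs]; exact hab
    exact_mod_cast this
  have hconf_y : (∀ i, 0 ≤ (h i : ℝ) * y i) ∧ (∀ i, y i = 0 → h i = 0) := by
    constructor
    · intro i
      obtain ⟨hs, ha⟩ := hhconf i
      rcases eq_or_ne (g₀ i) 0 with h0 | h0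
      · have : h i = 0 := by
          have := ha
          rw [h0, abs_zero] at this
          exact abs_nonpos_iff.mp this
        simp [this]
      · have h1 : (0:ℝ) ≤ (h i : ℝ) * (g₀ i : ℝ) := by exact_mod_cast hs
        have h2 : (0:ℝ) < (g₀ i : ℝ) * (g₀ i : ℝ) := by
          have hne : (g₀ i : ℝ) ≠ 0 := by exact_mod_cast h0
          exact mul_self_pos.mpr hne
        nlinarith [hg₀sign i]
    · intro i hyi
      have hg0 : g₀ i = 0 := hg₀zero i hyi
      obtain ⟨_, ha⟩ := hhconf i
      rw [hg0, abs_zero] at ha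
      exact abs_nonpos_iff.mp ha
  refine ⟨h, ⟨hhne, hhker, ?_⟩, hconf_y.1, hconf_y.2⟩
  intro h' hne' hker' hconf'
  -- h' is conformal to g₀ by transitivity
  have hconf₀ : ConformalTo h' g₀ := by
    intro i
    obtain ⟨hs1, ha1⟩ := hconf' i
    obtain ⟨hs2, ha2⟩ := hhconf i
    refine ⟨?_, le_trans ha1 ha2⟩
    rcases eq_or_ne (h i) 0 with h0 | h0
    · have : h' i = 0 := by
        rw [h0, abs_zero] at ha1
        exact abs_nonpos_iff.mp ha1
      simp [this]
    · have hpos : 0 < h i * h i := mul_self_pos.mpr h0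
      nlinarith
  have hle : Nat.find hP ≤ ∑ i, (h' i).natAbs :=
    Nat.find_min' hP ⟨h', hne', hker', hconf₀, rfl⟩
  have hge : ∑ i, (h' i).natAbs ≤ ∑ i, (h i).natAbs :=
    Finset.sum_le_sum fun i _ => habs _ _ (hconf' i).2
  have heq : ∑ i, (h' i).natAbs = ∑ i, (h i).natAbs := le_antisymm hge (hhsum ▸ hle)
  have hptwise := (Finset.sum_eq_sum_iff_of_le fun i (_ : i ∈ Finset.univ) =>
    habs _ _ (hconf' i).2).mp heq
  funext i
  have hna : (h' i).natAbs = (h i).natAbs := hptwise i (Finset.mem_univ i)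
  rcases Int.natAbs_eq_natAbs_iff.mp hna with he | he
  · exact he
  · rcases eq_or_ne (h i) 0 with h0 | h0
    · rw [he, h0, neg_zero]
    · exfalso
      have hs := (hconf' i).1
      rw [he] at hs
      nlinarith [mul_self_pos.mpr h0]

private lemma conformal_decomposition_aux {m n : ℕ} (A : Matrix (Fin m) (Fin n) ℤ) :
    ∀ (N : ℕ) (y : Fin n → ℝ), (A.map (Int.cast : ℤ → ℝ)).mulVec y = 0 →
    (Finset.univ.filter fun i => y i ≠ 0).card ≤ N →
    ∃ (k : ℕ) (lam : Fin k → ℝ) (g : Fin k → Fin n → ℤ),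
      k ≤ N ∧
      (∀ j, 0 ≤ lam j) ∧ (∀ j, InGraver A (g j)) ∧
      (∀ j i, 0 ≤ (g j i : ℝ) * y i) ∧ (∀ j i, y i = 0 → g j i = 0) ∧
      (∀ i, y i = ∑ j, lam j * (g j i : ℝ)) := by
  classical
  intro N
  induction N with
  | zero =>
    intro y hker hcard
    have hy0 : ∀ i, y i = 0 := by
      intro i
      by_contra hi
      have : i ∈ Finset.univ.filter fun i => y i ≠ 0 := by simp [hi]
      have := Finset.card_pos.mpr ⟨i, this⟩
      omega
    exact ⟨0, Fin.elim0, Fin.elim0, le_refl _, fun j => j.elim0, fun j => j.elim0,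
      fun j => j.elim0, fun j => j.elim0, fun i => by simp [hy0 i]⟩
  | succ N ih =>
    intro y hker hcard
    rcases eq_or_ne y 0 with hy0 | hy0
    · exact ⟨0, Fin.elim0, Fin.elim0, Nat.zero_le _, fun j => j.elim0, fun j => j.elim0,
        fun j => j.elim0, fun j => j.elim0, fun i => by simp [hy0]⟩
    obtain ⟨g, hgGraver, hgsign, hgzero⟩ := exists_graver_conformal A y hker hy0
    obtain ⟨i₁, hi₁⟩ : ∃ i, g i ≠ 0 := by
      by_contra h
      push_neg at h
      exact hgGraver.1 (funext h)
    set T : Finset (Fin n) := Finset.univ.filter fun i => g i ≠ 0 with hT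
    have hTne : T.Nonempty := ⟨i₁, by simp [hT, hi₁]⟩
    obtain ⟨i₀, hi₀T, hmin⟩ := Finset.exists_min_image T (fun i => y i / (g i : ℝ)) hTne
    have hgi₀ : g i₀ ≠ 0 := by simpa [hT] using hi₀T
    have hgi₀R : (g i₀ : ℝ) ≠ 0 := by exact_mod_cast hgi₀
    have hyi₀ : y i₀ ≠ 0 := fun h => hgi₀ (hgzero i₀ h)
    set lam₀ : ℝ := y i₀ / (g i₀ : ℝ) with hlam₀
    have hprod : 0 < (g i₀ : ℝ) * y i₀ :=
      lt_of_le_of_ne (hgsign i₀) (by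
        intro h
        exact hyi₀ (by
          rcases mul_eq_zero.mp h.symm with h' | h'
          · exact absurd h' hgi₀R
          · exact h'))
    have hlam₀pos : 0 < lam₀ := by
      rw [hlam₀, div_eq_mul_inv]
      rcases lt_or_gt_of_ne hgi₀R with hneg | hpos
      · have : y i₀ < 0 := by nlinarith
        have : ((g i₀ : ℝ))⁻¹ < 0 := inv_neg''.mpr hneg
        nlinarith
      · have : 0 < y i₀ := by nlinarith
        have : 0 < ((g i₀ : ℝ))⁻¹ := inv_pos.mpr hpos
        nlinarith
    set y' : Fin n → ℝ := fun i => y i - lam₀ * (g i : ℝ) with hy'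
    have hy'ker : (A.map (Int.cast : ℤ → ℝ)).mulVec y' = 0 := by
      have hgkerR : (A.map (Int.cast : ℤ → ℝ)).mulVec (fun i => (g i : ℝ)) = 0 := by
        funext j
        have := congrFun hgGraver.2.1 j
        simp only [Matrix.mulVec, dotProduct, Matrix.map_apply, Pi.zero_apply] at this ⊢
        have h2 : ((∑ i, A j i * g i : ℤ) : ℝ) = 0 := by exact_mod_cast this
        push_cast at h2
        convert h2 using 1
      funext j
      have h1 := congrFun hker j
      have h2 := congrFun hgkerR j
      simp only [Matrix.mulVec, dotProduct, Matrix.map_apply, Pi.zero_apply,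
        hy'] at h1 h2 ⊢
      calc ∑ i, (A j i : ℝ) * (y i - lam₀ * (g i : ℝ))
          = (∑ i, (A j i : ℝ) * y i) - lam₀ * ∑ i, (A j i : ℝ) * (g i : ℝ) := by
            rw [Finset.mul_sum, ← Finset.sum_sub_distrib]
            exact Finset.sum_congr rfl fun i _ => by ring
        _ = 0 := by rw [h1, h2]; ring
    have hsub : ∀ i, y i = 0 → y' i = 0 := by
      intro i hyi
      simp [hy', hyi, hgzero i hyi]
    have hzero' : y' i₀ = 0 := by
      simp only [hy', hlam₀]
      field_simp
      ring
    have hsign' : ∀ i, 0 ≤ y' i * y i := by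
      intro i
      rcases eq_or_ne (g i) 0 with h0 | h0
      · simp [hy', h0, mul_self_nonneg]
      · have hiT : i ∈ T := by simp [hT, h0]
        have hlemin : lam₀ ≤ y i / (g i : ℝ) := hmin i hiT
        have hgiR : (g i : ℝ) ≠ 0 := by exact_mod_cast h0
        have hyine : y i ≠ 0 := fun h => h0 (hgzero i h)
        have hprod' : 0 < (g i : ℝ) * y i :=
          lt_of_le_of_ne (hgsign i) (by
            intro h
            exact hyine (by
              rcases mul_eq_zero.mp h.symm with h' | h'
              · exact absurd h' hgiR
              · exact h'))
        have key : y' i * y i = (y i / (g i : ℝ) - lam₀) * ((g i : ℝ) * y i) := by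
          simp only [hy']
          field_simp
        rw [key]
        exact mul_nonneg (sub_nonneg.mpr hlemin) hprod'.le
    -- support decreases
    have hyi₀mem : i₀ ∈ Finset.univ.filter fun i => y i ≠ 0 := by simp [hyi₀]
    have hsubset : (Finset.univ.filter fun i => y' i ≠ 0) ⊆
        (Finset.univ.filter fun i => y i ≠ 0).erase i₀ := by
      intro i hi
      simp only [Finset.mem_filter, Finset.mem_univ, true_and] at hi
      rw [Finset.mem_erase]
      refine ⟨?_, ?_⟩
      · intro h; exact hi (h ▸ hzero')
      · simp only [Finset.mem_filter, Finset.mem_univ, true_and]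
        intro h; exact hi (hsub i h)
    have hcard' : (Finset.univ.filter fun i => y' i ≠ 0).card ≤ N := by
      have h1 := Finset.card_le_card hsubset
      rw [Finset.card_erase_of_mem hyi₀mem] at h1
      omega
    obtain ⟨k', lam', g', hk', hlam', hGrav', hsign'', hzero'', hsum'⟩ := ih y' hy'ker hcard'
    refine ⟨k' + 1, Fin.cons lam₀ lam', Fin.cons g g', by omega, ?_, ?_, ?_, ?_, ?_⟩
    · intro j
      refine Fin.cases ?_ ?_ j
      · exact hlam₀pos.le
      · exact fun j' => hlam' j'
    · intro j
      refine Fin.cases ?_ ?_ j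
      · exact hgGraver
      · exact fun j' => hGrav' j'
    · intro j i
      refine Fin.cases ?_ ?_ j
      · exact hgsign i
      · intro j'
        simp only [Fin.cons_succ]
        rcases eq_or_ne (y' i) 0 with h0 | h0
        · simp [hzero'' j' i h0]
        · have h1 := hsign'' j' i
          have h2 := hsign' i
          nlinarith [mul_self_pos.mpr h0]
    · intro j i hyi
      refine Fin.cases ?_ ?_ j
      · exact hgzero i hyi
      · intro j'
        simp only [Fin.cons_succ]
        exact hzero'' j' i (hsub i hyi)
    · intro i
      rw [Fin.sum_univ_succ]
      simp only [Fin.cons_zero, Fin.cons_succ]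
      have := hsum' i
      simp only [hy'] at this
      linarith

private lemma convex_superadd {φ : ℝ → ℝ} (hφ : ConvexOn ℝ Set.univ φ) :
    ∀ a s t : ℝ, 0 ≤ s → 0 ≤ t → φ (a + s) + φ (a + t) ≤ φ (a + s + t) + φ a := by
  intro a s t hs ht
  rcases eq_or_lt_of_le (add_nonneg hs ht) with h0 | h0
  · have hs0 : s = 0 := by linarith
    have ht0 : t = 0 := by linarith
    simp [hs0, ht0]
  · set μ := s / (s + t) with hμ
    have hμ0 : 0 ≤ μ := by positivity
    have hμ1 : μ ≤ 1 := by rw [hμ, div_le_one h0]; linarith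
    have h1 : φ (a + s) ≤ (1 - μ) * φ a + μ * φ (a + s + t) := by
      have hcv := hφ.2 (Set.mem_univ a) (Set.mem_univ (a + s + t)) 
        (show (0:ℝ) ≤ 1 - μ from by linarith) (show (0:ℝ) ≤ μ from hμ0)
        (show (1 - μ) + μ = 1 from by ring)
      have harg : (1 - μ) • a + μ • (a + s + t) = a + s := by
        simp only [smul_eq_mul, hμ]
        field_simp
        ring
      rwa [harg, smul_eq_mul, smul_eq_mul] at hcv
    have h2 : φ (a + t) ≤ μ * φ a + (1 - μ) * φ (a + s + t) := by
      have hcv := hφ.2 (Set.mem_univ a) (Set.mem_univ (a + s + t)) 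
        (show (0:ℝ) ≤ μ from hμ0) (show (0:ℝ) ≤ 1 - μ from by linarith)
        (show μ + (1 - μ) = 1 from by ring)
      have harg : μ • a + (1 - μ) • (a + s + t) = a + t := by
        simp only [smul_eq_mul, hμ]
        field_simp
        ring
      rwa [harg, smul_eq_mul, smul_eq_mul] at hcv
    linarith

private lemma convex_superadd' {φ : ℝ → ℝ} (hφ : ConvexOn ℝ Set.univ φ)
    (a s t : ℝ) (hst : 0 ≤ s * t) :
    φ (a + s) + φ (a + t) ≤ φ (a + s + t) + φ a := by
  rcases le_or_gt 0 s with hs | hs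
  · rcases le_or_gt 0 t with ht | ht
    · exact convex_superadd hφ a s t hs ht
    · have hs0 : s = 0 := le_antisymm (by nlinarith) hs
      simp only [hs0, add_zero, zero_add]
      linarith
  · have ht : t ≤ 0 := by nlinarith
    have h := convex_superadd hφ (a + s + t) (-s) (-t) (by linarith) (by linarith)
    rw [show a + s + t + -s + -t = a from by ring,
        show a + s + t + -s = a + t from by ring,
        show a + s + t + -t = a + s from by ring] at h
    linarith


private lemma mulVec_apply_real {m n : ℕ} (A : Matrix (Fin m) (Fin n) ℤ)
    (v : Fin n → ℝ) (j : Fin m) :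
    (A.map (Int.cast : ℤ → ℝ)).mulVec v j = ∑ i, (A j i : ℝ) * v i := by
  simp [Matrix.mulVec, dotProduct]

private lemma mulVec_apply_int {m n : ℕ} (A : Matrix (Fin m) (Fin n) ℤ)
    (v : Fin n → ℤ) (j : Fin m) :
    A.mulVec v j = ∑ i, A j i * v i := by
  simp [Matrix.mulVec, dotProduct]

set_option maxHeartbeats 1000000 in
/-- Solving the continuous relaxation to `ε`-accuracy via a scaled-up integer
program: if `(1/p)·n·g_∞(A) ≤ ε` and `ẑ` is an optimum of
`min{f(z/p) : Az = p·b, p·l ≤ z ≤ p·u, z ∈ ℤⁿ}`, then `(1/p)·ẑ` is within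
`ℓ_∞`-distance `ε` of some optimum of the continuous relaxation. -/
theorem relaxation_via_scaled_ip (m n : ℕ)
    (A : Matrix (Fin m) (Fin n) ℤ) (b : Fin m → ℤ) (l u : Fin n → ℤ)
    (f : (Fin n → ℝ) → ℝ) (fi : Fin n → ℝ → ℝ)
    (hf : ∀ x, f x = ∑ i, fi i (x i))
    (hconv : ∀ i, ConvexOn ℝ Set.univ (fi i))
    (Ginf : ℤ) (hGinf : ∀ g, InGraver A g → ∀ i, |g i| ≤ Ginf)
    (ε : ℝ) (hε : 0 < ε) (p : ℕ) (hp : 1 ≤ p)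
    (hpe : (n : ℝ) * (Ginf : ℝ) / (p : ℝ) ≤ ε)
    (zhat : Fin n → ℤ)
    (hzhat : IntOpt A (fun i => (p : ℤ) * b i) (fun i => (p : ℤ) * l i)
      (fun i => (p : ℤ) * u i) (fun x => f (fun i => x i / (p : ℝ))) zhat) :
    ∃ xstar : Fin n → ℝ, RelOpt A b l u f xstar ∧
      ∀ i, |xstar i - (zhat i : ℝ) / (p : ℝ)| ≤ ε := by
  classical
  obtain ⟨⟨hzker, hzbnd⟩, hzopt⟩ := hzhat
  have hp0 : (0:ℝ) < (p:ℝ) := by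
    have : 0 < p := hp
    exact_mod_cast this
  -- continuity of f
  have hficont : ∀ i, Continuous (fi i) := fun i => by
    rw [← continuousOn_univ]
    exact (hconv i).continuousOn isOpen_univ
  have hfcont : Continuous f := by
    have hfe : f = fun x => ∑ i, fi i (x i) := funext hf
    rw [hfe]
    exact continuous_finset_sum _ fun i _ => (hficont i).comp (continuous_apply i)
  -- the feasible set of the relaxation is compact and nonempty
  set S : Set (Fin n → ℝ) := {x | RelFeas A b l u x} with hSdef
  have hSclosed : IsClosed S := by
    have hmulcont : Continuous fun x : Fin n → ℝ => (A.map (Int.cast : ℤ → ℝ)).mulVec x :=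
      (A.map (Int.cast : ℤ → ℝ)).mulVecLin.continuous_of_finiteDimensional
    have h1 : IsClosed {x : Fin n → ℝ |
        (A.map (Int.cast : ℤ → ℝ)).mulVec x = fun i => (b i : ℝ)} :=
      isClosed_eq hmulcont continuous_const
    have h2 : IsClosed {x : Fin n → ℝ | ∀ i, (l i : ℝ) ≤ x i ∧ x i ≤ (u i : ℝ)} := by
      have he : {x : Fin n → ℝ | ∀ i, (l i : ℝ) ≤ x i ∧ x i ≤ (u i : ℝ)} =
          ⋂ i, ((fun x : Fin n → ℝ => x i) ⁻¹' Set.Icc (l i : ℝ) (u i : ℝ)) := by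
        ext x
        simp [Set.mem_iInter, Set.mem_Icc]
      rw [he]
      exact isClosed_iInter fun i => IsClosed.preimage (continuous_apply i) isClosed_Icc
    have hSeq : S = _ ∩ _ := Set.ext fun x => Iff.rfl
    rw [hSeq]
    exact h1.inter h2
  have hScompact : IsCompact S := by
    have hK : IsCompact (Set.pi Set.univ fun i => Set.Icc (l i : ℝ) (u i : ℝ)) :=
      isCompact_univ_pi fun i => isCompact_Icc
    refine hK.of_isClosed_subset hSclosed ?_
    intro x hx
    rw [Set.mem_univ_pi]
    exact fun i => ⟨(hx.2 i).1, (hx.2 i).2⟩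
  -- zhat / p is feasible for the relaxation
  have hzkerR : ∀ j, ∑ i, (A j i : ℝ) * (zhat i : ℝ) = (p : ℝ) * (b j : ℝ) := by
    intro j
    have h1 := congrFun hzker j
    rw [mulVec_apply_int] at h1
    have h2 : ((∑ i, A j i * zhat i : ℤ) : ℝ) = (((p : ℤ) * b j : ℤ) : ℝ) := by
      exact_mod_cast h1
    push_cast at h2
    convert h2 using 2
  have hzfeasR : RelFeas A b l u (fun i => (zhat i : ℝ) / (p : ℝ)) := by
    constructor
    · funext j
      rw [mulVec_apply_real]
      have : ∑ i, (A j i : ℝ) * ((zhat i : ℝ) / (p : ℝ))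
          = (∑ i, (A j i : ℝ) * (zhat i : ℝ)) / (p : ℝ) := by
        rw [Finset.sum_div]
        exact Finset.sum_congr rfl fun i _ => by ring
      rw [this, hzkerR j]
      field_simp
    · intro i
      have h1 := (hzbnd i).1
      have h2 := (hzbnd i).2
      have h1R : (p : ℝ) * (l i : ℝ) ≤ (zhat i : ℝ) := by exact_mod_cast h1
      have h2R : (zhat i : ℝ) ≤ (p : ℝ) * (u i : ℝ) := by exact_mod_cast h2
      constructor
      · rw [le_div_iff₀ hp0]; linarith
      · rw [div_le_iff₀ hp0]; linarith
  -- an optimum of the relaxation exists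
  obtain ⟨xhat, hxhatS, hxmin⟩ :=
    hScompact.exists_isMinOn ⟨_, hzfeasR⟩ hfcont.continuousOn
  have hxminS : ∀ w, RelFeas A b l u w → f xhat ≤ f w := fun w hw =>
    isMinOn_iff.mp hxmin w hw
  have hxrow : ∀ j, ∑ i, (A j i : ℝ) * xhat i = (b j : ℝ) := by
    intro j
    have := congrFun hxhatS.1 j
    rwa [mulVec_apply_real] at this
  have hxbnd : ∀ i, (l i : ℝ) ≤ xhat i ∧ xhat i ≤ (u i : ℝ) := hxhatS.2
  -- the difference vector
  set y : Fin n → ℝ := fun i => (p : ℝ) * xhat i - (zhat i : ℝ) with hydef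
  have hyker : (A.map (Int.cast : ℤ → ℝ)).mulVec y = 0 := by
    funext j
    rw [mulVec_apply_real]
    have : ∑ i, (A j i : ℝ) * y i
        = (p : ℝ) * (∑ i, (A j i : ℝ) * xhat i) - ∑ i, (A j i : ℝ) * (zhat i : ℝ) := by
      rw [Finset.mul_sum, ← Finset.sum_sub_distrib]
      refine Finset.sum_congr rfl fun i _ => ?_
      simp only [hydef]
      ring
    rw [Pi.zero_apply, this, hxrow j, hzkerR j]
    ring
  -- conformal decomposition of y into Graver elements
  have hcard : (Finset.univ.filter fun i => y i ≠ 0).card ≤ n := by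
    calc (Finset.univ.filter fun i => y i ≠ 0).card
        ≤ (Finset.univ : Finset (Fin n)).card := Finset.card_filter_le _ _
      _ = n := by simp
  obtain ⟨k, lam, g, hk, hlam, hGrav, hgsign, hgzero, hgsum⟩ :=
    conformal_decomposition_aux A n y hyker hcard
  -- rounded-down combination
  set D : Fin n → ℤ := fun i => ∑ j, ⌊lam j⌋ * g j i with hDdef
  set R : Fin n → ℝ := fun i => y i - (D i : ℝ) with hRdef
  have hDR : ∀ i, (D i : ℝ) = ∑ j, (⌊lam j⌋ : ℝ) * (g j i : ℝ) := by
    intro i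
    simp only [hDdef]
    push_cast
    rfl
  have hfl0 : ∀ j, (0:ℝ) ≤ (⌊lam j⌋ : ℝ) := by
    intro j
    have : (0:ℤ) ≤ ⌊lam j⌋ := Int.floor_nonneg.mpr (hlam j)
    exact_mod_cast this
  have hfle : ∀ j, ((⌊lam j⌋ : ℝ)) ≤ lam j := fun j => Int.floor_le (lam j)
  have hgn : ∀ i, 0 ≤ y i → ∀ j, (0:ℝ) ≤ (g j i : ℝ) := by
    intro i hyi j
    rcases eq_or_lt_of_le hyi with h0 | h0
    · have : g j i = 0 := hgzero j i h0.symm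
      simp [this]
    · nlinarith [hgsign j i]
  have hgp : ∀ i, y i ≤ 0 → ∀ j, (g j i : ℝ) ≤ 0 := by
    intro i hyi j
    rcases eq_or_lt_of_le hyi with h0 | h0
    · have : g j i = 0 := hgzero j i h0
      simp [this]
    · nlinarith [hgsign j i]
  have hDpos : ∀ i, 0 ≤ y i → 0 ≤ (D i : ℝ) ∧ (D i : ℝ) ≤ y i := by
    intro i hyi
    constructor
    · rw [hDR]
      exact Finset.sum_nonneg fun j _ => mul_nonneg (hfl0 j) (hgn i hyi j)
    · rw [hDR, hgsum i]
      exact Finset.sum_le_sum fun j _ =>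
        mul_le_mul_of_nonneg_right (hfle j) (hgn i hyi j)
  have hDneg : ∀ i, y i ≤ 0 → y i ≤ (D i : ℝ) ∧ (D i : ℝ) ≤ 0 := by
    intro i hyi
    constructor
    · rw [hDR, hgsum i]
      exact Finset.sum_le_sum fun j _ =>
        mul_le_mul_of_nonpos_right (hfle j) (hgp i hyi j)
    · rw [hDR]
      exact Finset.sum_nonpos fun j _ => mul_nonpos_of_nonneg_of_nonpos (hfl0 j) (hgp i hyi j)
  have hDRsign : ∀ i, 0 ≤ (D i : ℝ) * R i := by
    intro i
    rcases le_total 0 (y i) with h | h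
    · obtain ⟨h1, h2⟩ := hDpos i h
      have : 0 ≤ R i := by simp only [hRdef]; linarith
      exact mul_nonneg h1 this
    · obtain ⟨h1, h2⟩ := hDneg i h
      have : R i ≤ 0 := by simp only [hRdef]; linarith
      nlinarith
  -- D is an integer kernel element
  have hAD : A.mulVec D = 0 := by
    funext j
    rw [mulVec_apply_int]
    simp only [hDdef]
    rw [Pi.zero_apply]
    calc ∑ i, A j i * ∑ j', ⌊lam j'⌋ * g j' i
        = ∑ i, ∑ j', ⌊lam j'⌋ * (A j i * g j' i) := by
          refine Finset.sum_congr rfl fun i _ => ?_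
          rw [Finset.mul_sum]
          exact Finset.sum_congr rfl fun j' _ => by ring
      _ = ∑ j', ∑ i, ⌊lam j'⌋ * (A j i * g j' i) := Finset.sum_comm
      _ = ∑ j', ⌊lam j'⌋ * ∑ i, A j i * g j' i := by
          refine Finset.sum_congr rfl fun j' _ => ?_
          rw [Finset.mul_sum]
      _ = 0 := by
          refine Finset.sum_eq_zero fun j' _ => ?_
          have := congrFun (hGrav j').2.1 j
          rw [mulVec_apply_int] at this
          simp [this]
  -- the shifted integer point
  set z' : Fin n → ℤ := fun i => zhat i + D i with hz'def
  have hz'cast : ∀ i, ((z' i : ℤ) : ℝ) = (zhat i : ℝ) + (D i : ℝ) := by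
    intro i
    simp [hz'def]
  have hz'feas : IntFeas A (fun i => (p : ℤ) * b i) (fun i => (p : ℤ) * l i)
      (fun i => (p : ℤ) * u i) z' := by
    constructor
    · have hzD : z' = zhat + D := rfl
      rw [hzD, Matrix.mulVec_add, hzker, hAD, add_zero]
    · intro i
      have hxu : (p : ℝ) * xhat i ≤ (p : ℝ) * (u i : ℝ) :=
        mul_le_mul_of_nonneg_left (hxbnd i).2 hp0.le
      have hxl : (p : ℝ) * (l i : ℝ) ≤ (p : ℝ) * xhat i :=
        mul_le_mul_of_nonneg_left (hxbnd i).1 hp0.le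
      rcases le_total 0 (y i) with h | h
      · obtain ⟨h1, h2⟩ := hDpos i h
        constructor
        · have hD0 : (0:ℤ) ≤ D i := by exact_mod_cast h1
          have hzl : (p : ℤ) * l i ≤ zhat i := (hzbnd i).1
          show (p : ℤ) * l i ≤ zhat i + D i
          omega
        · show z' i ≤ (p : ℤ) * u i
          have : ((z' i : ℤ) : ℝ) ≤ (((p : ℤ) * u i : ℤ) : ℝ) := by
            rw [hz'cast i]
            push_cast
            have hyi : (zhat i : ℝ) + y i = (p : ℝ) * xhat i := by
              simp only [hydef]; ring
            nlinarith
          exact_mod_cast this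
      · obtain ⟨h1, h2⟩ := hDneg i h
        constructor
        · show (p : ℤ) * l i ≤ z' i
          have : (((p : ℤ) * l i : ℤ) : ℝ) ≤ ((z' i : ℤ) : ℝ) := by
            rw [hz'cast i]
            push_cast
            have hyi : (zhat i : ℝ) + y i = (p : ℝ) * xhat i := by
              simp only [hydef]; ring
            nlinarith
          exact_mod_cast this
        · have hD0 : D i ≤ (0:ℤ) := by exact_mod_cast h2
          have hzu : zhat i ≤ (p : ℤ) * u i := (hzbnd i).2
          show zhat i + D i ≤ (p : ℤ) * u i
          omega
  -- the candidate optimum of the relaxation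
  set x' : Fin n → ℝ := fun i => ((zhat i : ℝ) + R i) / (p : ℝ) with hx'def
  have hx'alt : ∀ i, x' i = xhat i - (D i : ℝ) / (p : ℝ) := by
    intro i
    simp only [hx'def, hRdef, hydef]
    field_simp
    ring
  have hx'feas : RelFeas A b l u x' := by
    constructor
    · funext j
      rw [mulVec_apply_real]
      have hADR : ∑ i, (A j i : ℝ) * (D i : ℝ) = 0 := by
        have := congrFun hAD j
        rw [mulVec_apply_int] at this
        have h2 : ((∑ i, A j i * D i : ℤ) : ℝ) = 0 := by exact_mod_cast this
        push_cast at h2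
        convert h2 using 2
      have : ∑ i, (A j i : ℝ) * x' i
          = (∑ i, (A j i : ℝ) * xhat i) - (∑ i, (A j i : ℝ) * (D i : ℝ)) / (p : ℝ) := by
        rw [Finset.sum_div, ← Finset.sum_sub_distrib]
        refine Finset.sum_congr rfl fun i _ => ?_
        rw [hx'alt i]
        ring
      rw [this, hxrow j, hADR]
      simp
    · intro i
      have hxu := (hxbnd i).2
      have hxl := (hxbnd i).1
      have hzl : (p : ℝ) * (l i : ℝ) ≤ (zhat i : ℝ) := by exact_mod_cast (hzbnd i).1
      have hzu : (zhat i : ℝ) ≤ (p : ℝ) * (u i : ℝ) := by exact_mod_cast (hzbnd i).2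
      have hyi : (zhat i : ℝ) + y i = (p : ℝ) * xhat i := by
        simp only [hydef]; ring
      rcases le_total 0 (y i) with h | h
      · obtain ⟨h1, h2⟩ := hDpos i h
        have hR1 : 0 ≤ R i := by simp only [hRdef]; linarith
        have hR2 : R i ≤ y i := by simp only [hRdef]; linarith
        constructor
        · rw [hx'def, le_div_iff₀ hp0]; nlinarith
        · rw [hx'def, div_le_iff₀ hp0]; nlinarith
      · obtain ⟨h1, h2⟩ := hDneg i h
        have hR1 : y i ≤ R i := by simp only [hRdef]; linarith
        have hR2 : R i ≤ 0 := by simp only [hRdef]; linarith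
        constructor
        · rw [hx'def, le_div_iff₀ hp0]; nlinarith
        · rw [hx'def, div_le_iff₀ hp0]; nlinarith
  -- x' is optimal, via convex superadditivity and optimality of zhat
  have hz'opt : f (fun i => (zhat i : ℝ) / (p : ℝ)) ≤ f (fun i => (z' i : ℝ) / (p : ℝ)) :=
    hzopt z' hz'feas
  have hsa : ∀ i, fi i ((z' i : ℝ) / (p : ℝ)) + fi i (x' i)
      ≤ fi i (xhat i) + fi i ((zhat i : ℝ) / (p : ℝ)) := by
    intro i
    have hst : 0 ≤ ((D i : ℝ) / (p : ℝ)) * (R i / (p : ℝ)) := by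
      have := hDRsign i
      have hp2 : (0:ℝ) < (p : ℝ) * (p : ℝ) := by positivity
      rw [div_mul_div_comm]
      positivity
    have h := convex_superadd' (hconv i) ((zhat i : ℝ) / (p : ℝ))
      ((D i : ℝ) / (p : ℝ)) (R i / (p : ℝ)) hst
    have e1 : (zhat i : ℝ) / (p : ℝ) + (D i : ℝ) / (p : ℝ) = (z' i : ℝ) / (p : ℝ) := by
      rw [hz'cast i]; ring
    have e2 : (zhat i : ℝ) / (p : ℝ) + R i / (p : ℝ) = x' i := by
      rw [hx'def]; ring
    have e3 : (zhat i : ℝ) / (p : ℝ) + (D i : ℝ) / (p : ℝ) + R i / (p : ℝ) = xhat i := by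
      have hyi : (zhat i : ℝ) + y i = (p : ℝ) * xhat i := by
        simp only [hydef]; ring
      simp only [hRdef]
      field_simp
      linarith
    rw [e3, e1, e2] at h
    exact h
  have hfx' : f x' ≤ f xhat := by
    have hsum2 : f (fun i => (z' i : ℝ) / (p : ℝ)) + f x'
        ≤ f xhat + f (fun i => (zhat i : ℝ) / (p : ℝ)) := by
      rw [hf, hf, hf, hf, ← Finset.sum_add_distrib, ← Finset.sum_add_distrib]
      exact Finset.sum_le_sum fun i _ => hsa i
    linarith
  -- the distance bound
  have hRbound : ∀ i, |R i| ≤ ε * (p : ℝ) := by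
    intro i
    rcases Nat.eq_zero_or_pos k with hk0 | hkpos
    · have hy0 : y i = 0 := by
        rw [hgsum i]
        subst hk0
        simp
      have hD0 : (D i : ℝ) = 0 := by
        rw [hDR]
        subst hk0
        simp
      have : R i = 0 := by simp only [hRdef]; rw [hy0, hD0]; ring
      rw [this, abs_zero]
      positivity
    · have j0 : Fin k := ⟨0, hkpos⟩
      have hGinf0 : (0:ℝ) ≤ (Ginf : ℝ) := by
        have h1 := hGinf (g j0) (hGrav j0) i
        have h2 : (0:ℤ) ≤ |g j0 i| := abs_nonneg _
        have : (0:ℤ) ≤ Ginf := le_trans h2 h1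
        exact_mod_cast this
      have hRrep : R i = ∑ j, (lam j - (⌊lam j⌋ : ℝ)) * (g j i : ℝ) := by
        simp only [hRdef]
        rw [hgsum i, hDR, ← Finset.sum_sub_distrib]
        exact Finset.sum_congr rfl fun j _ => by ring
      have hterm : ∀ j : Fin k, |(lam j - (⌊lam j⌋ : ℝ)) * (g j i : ℝ)| ≤ (Ginf : ℝ) := by
        intro j
        rw [abs_mul]
        have hf1 : |lam j - (⌊lam j⌋ : ℝ)| ≤ 1 := by
          rw [abs_of_nonneg (by linarith [hfle j])]
          linarith [Int.sub_one_lt_floor (lam j)]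
        have hf2 : |(g j i : ℝ)| ≤ (Ginf : ℝ) := by
          have := hGinf (g j) (hGrav j) i
          have h2 : (|g j i| : ℤ) ≤ Ginf := this
          calc |(g j i : ℝ)| = ((|g j i| : ℤ) : ℝ) := by push_cast; rfl
            _ ≤ (Ginf : ℝ) := by exact_mod_cast h2
        calc |lam j - (⌊lam j⌋ : ℝ)| * |(g j i : ℝ)|
            ≤ 1 * (Ginf : ℝ) :=
              mul_le_mul hf1 hf2 (abs_nonneg _) zero_le_one
          _ = (Ginf : ℝ) := one_mul _
      have hkn : (k : ℝ) ≤ (n : ℝ) := by exact_mod_cast hk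
      have h1 : |R i| ≤ (k : ℝ) * (Ginf : ℝ) := by
        rw [hRrep]
        calc |∑ j, (lam j - (⌊lam j⌋ : ℝ)) * (g j i : ℝ)|
            ≤ ∑ j, |(lam j - (⌊lam j⌋ : ℝ)) * (g j i : ℝ)| := Finset.abs_sum_le_sum_abs _ _
          _ ≤ ∑ _j : Fin k, (Ginf : ℝ) := Finset.sum_le_sum fun j _ => hterm j
          _ = (k : ℝ) * (Ginf : ℝ) := by simp [mul_comm]
      have h2 : (k : ℝ) * (Ginf : ℝ) ≤ (n : ℝ) * (Ginf : ℝ) :=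
        mul_le_mul_of_nonneg_right hkn hGinf0
      have h3 : (n : ℝ) * (Ginf : ℝ) ≤ ε * (p : ℝ) := by
        rw [div_le_iff₀ hp0] at hpe
        exact hpe
      linarith
  refine ⟨x', ⟨hx'feas, fun w hw => le_trans hfx' (hxminS w hw)⟩, ?_⟩
  intro i
  have : x' i - (zhat i : ℝ) / (p : ℝ) = R i / (p : ℝ) := by
    rw [hx'def]
    ring
  rw [this, abs_div, abs_of_pos hp0, div_le_iff₀ hp0]
  calc |R i| ≤ ε * (p : ℝ) := hRbound i
    _ = ε * (p : ℝ) := rfl
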